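/- For the search problem associated with a matroid M on a finite nonempty ground set L (individuals U = L, feasible solutions S = independent sets of M), a distribution over S is maxmin-fair if and only if it is minmax-Pareto. -/

import Mathlib

set_option linter.unusedSectionVars false


variable {α : Type*}

/-- `p` is a probability distribution over the feasible solutions `sol`. -/
def IsDistrib [Fintype α] (sol : Finset α → Prop) (p : Finset α → ℝ) : Prop :=
  (∀ A, 0 ≤ p A) ∧ (∀ A, p A ≠ 0 → sol A) ∧ (∑ A : Finset α, p A) = 1

/-- The satisfaction probability of individual `u` under the distribution `p`. -/
def sat [Fintype α] [DecidableEq α] (p : Finset α → ℝ) (u : α) : ℝ :=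
  ∑ A : Finset α, if u ∈ A then p A else 0

section Helpers
variable [Fintype α] [DecidableEq α]

/-- Sum of satisfactions over a finset `T`. -/
lemma sat_sum_eq (p : Finset α → ℝ) (T : Finset α) :
    ∑ u ∈ T, sat p u = ∑ A : Finset α, ((A ∩ T).card : ℝ) * p A := by
  unfold sat
  rw [Finset.sum_comm]
  refine Finset.sum_congr rfl fun A _ => ?_
  rw [Finset.sum_ite_mem, Finset.sum_const, Finset.inter_comm, nsmul_eq_mul]

lemma sat_nonneg {p : Finset α → ℝ} (hp : ∀ A, 0 ≤ p A) (u : α) : 0 ≤ sat p u :=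
  Finset.sum_nonneg fun A _ => by split <;> simp [hp A]

/-- sat of a pointwise-modified distribution. -/
lemma sat_shift (p : Finset α → ℝ) (A A' : Finset α) (ε : ℝ) (w : α) :
    sat (fun B => p B + (if B = A' then ε else 0) - (if B = A then ε else 0)) w
      = sat p w + (if w ∈ A' then ε else 0) - (if w ∈ A then ε else 0) := by
  unfold sat
  have : ∀ B : Finset α,
      (if w ∈ B then (p B + (if B = A' then ε else 0) - (if B = A then ε else 0)) else 0)
        = (if w ∈ B then p B else 0) + (if B = A' then (if w ∈ B then ε else 0) else 0)
          - (if B = A then (if w ∈ B then ε else 0) else 0) := by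
    intro B; split <;> split <;> split <;> ring
  simp only [this]
  rw [Finset.sum_sub_distrib, Finset.sum_add_distrib,
    Finset.sum_ite_eq' Finset.univ A' (fun B => if w ∈ B then ε else 0),
    Finset.sum_ite_eq' Finset.univ A (fun B => if w ∈ B then ε else 0)]
  simp

end Helpers
section MatroidHelpers
variable [Fintype α] [DecidableEq α] {M : Matroid α}

open Matroid

/-- `p` is a distribution supported on (finset) bases of `M`. -/
def IsBaseDistrib [Fintype α] (M : Matroid α) (p : Finset α → ℝ) : Prop :=
  IsDistrib (fun A : Finset α => M.IsBase (A : Set α)) p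

lemma IsBaseDistrib.isDistribIndep {p : Finset α → ℝ} (hp : IsBaseDistrib M p) :
    IsDistrib (fun A : Finset α => M.Indep (A : Set α)) p :=
  ⟨hp.1, fun A hA => (hp.2.1 A hA).indep, hp.2.2⟩

/-- Two finset bases have the same card. -/
lemma base_card_eq {A B : Finset α} (hA : M.IsBase (A : Set α)) (hB : M.IsBase (B : Set α)) :
    A.card = B.card := by
  have := hA.encard_eq_encard_of_isBase hB
  rwa [Set.encard_coe_eq_coe_finsetCard, Set.encard_coe_eq_coe_finsetCard,
    Nat.cast_inj] at this

/-- An independent finset contained in the closure of another independent finset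
has no larger cardinality. -/
lemma card_le_of_subset_closure {I J : Finset α} (hI : M.Indep (I : Set α))
    (hJ : M.Indep (J : Set α)) (hIJ : (I : Set α) ⊆ M.closure (J : Set α)) :
    I.card ≤ J.card := by
  obtain ⟨J', hJ', hIJ'⟩ := hI.subset_isBasis_of_subset hIJ (M.closure_subset_ground _)
  have h1 : (I : Set α).encard ≤ J'.encard := Set.encard_mono hIJ'
  have h2 : J'.encard = (J : Set α).encard := hJ'.encard_eq_encard hJ.isBasis_closure
  rw [h2, Set.encard_coe_eq_coe_finsetCard, Set.encard_coe_eq_coe_finsetCard,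
    Nat.cast_le] at h1
  exact h1

/-- Exchange lemma: if `A` is a base, `X ⊆ A`, and `a ∉ A` is not spanned by `X`,
then `a` can be exchanged into `A` for some element outside `X`. -/
lemma exchange_lemma (hE : M.E = Set.univ) {A X : Finset α} (hA : M.IsBase (A : Set α))
    (hXA : X ⊆ A) (a : α) (haA : a ∉ A) (hcl : a ∉ M.closure (X : Set α)) :
    ∃ b ∈ A, b ∉ X ∧ M.IsBase ((insert a (A.erase b) : Finset α) : Set α) := by
  classical
  have hXi : M.Indep (X : Set α) := hA.indep.subset (by exact_mod_cast hXA)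
  have haX : M.Indep (insert a (X : Set α)) := by
    rw [hXi.insert_indep_iff_of_notMem (by exact_mod_cast fun h => haA (hXA h))]
    exact ⟨by rw [hE]; trivial, hcl⟩
  obtain ⟨B', hB', hsub, hsub'⟩ := haX.exists_isBase_subset_union_isBase hA
  have hB'fin : B'.Finite := Set.toFinite _
  set C : Finset α := hB'fin.toFinset with hC
  have hCB' : (C : Set α) = B' := by rw [hC]; simp only [Set.Finite.coe_toFinset]
  have hBC : M.IsBase (C : Set α) := by rwa [hCB']
  have hCsub : C ⊆ insert a A := by
    intro x hx
    have : x ∈ B' := by rwa [← hCB']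
    have := hsub' this
    rcases this with h | h
    · rcases h with h | h
      · simp [h]
      · exact Finset.mem_insert_of_mem (hXA (by exact_mod_cast h))
    · exact Finset.mem_insert_of_mem (by exact_mod_cast h)
  have haC : a ∈ C := by
    rw [← Finset.mem_coe, hCB']; exact hsub (Set.mem_insert _ _)
  have hXC : X ⊆ C := by
    intro x hx
    rw [← Finset.mem_coe, hCB']
    exact hsub (Set.mem_insert_of_mem _ (by exact_mod_cast hx))
  have hcard : C.card = A.card := base_card_eq hBC hA
  have heraseC : C.erase a ⊆ A := by
    intro x hx
    rcases Finset.mem_insert.1 (hCsub (Finset.mem_of_mem_erase hx)) with h | h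
    · exact absurd h (Finset.ne_of_mem_erase hx)
    · exact h
  have hcard' : (A \ C.erase a).card = 1 := by
    rw [Finset.card_sdiff_of_subset heraseC, Finset.card_erase_of_mem haC, hcard]
    have : 1 ≤ A.card := by
      rw [← hcard]; exact Finset.card_pos.2 ⟨a, haC⟩
    omega
  obtain ⟨b, hb⟩ := Finset.card_eq_one.1 hcard'
  have hbA : b ∈ A := by
    have : b ∈ A \ C.erase a := hb ▸ Finset.mem_singleton_self b
    exact (Finset.mem_sdiff.1 this).1
  have hbC : b ∉ C := by
    have h1 : b ∈ A \ C.erase a := hb ▸ Finset.mem_singleton_self b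
    have h2 := (Finset.mem_sdiff.1 h1).2
    intro hbc
    have hba : b ≠ a := fun h => haA (h ▸ hbA)
    exact h2 (Finset.mem_erase.2 ⟨hba, hbc⟩)
  refine ⟨b, hbA, fun hbX => hbC (hXC hbX), ?_⟩
  have : insert a (A.erase b) = C := by
    apply Finset.eq_of_subset_of_card_le
    · intro x hx
      rcases Finset.mem_insert.1 hx with h | h
      · exact h ▸ haC
      · -- x ∈ A.erase b : x ∈ A, x ≠ b; so x ∉ A \ C.erase a = {b}, hence x ∈ C.erase a
        have hxA := Finset.mem_of_mem_erase h
        have hxb := Finset.ne_of_mem_erase h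
        by_contra hxC
        have : x ∈ A \ C.erase a := by
          refine Finset.mem_sdiff.2 ⟨hxA, fun hc => hxC (Finset.mem_of_mem_erase hc)⟩
        rw [hb] at this
        exact hxb (Finset.mem_singleton.1 this)
    · rw [hcard, Finset.card_insert_of_notMem (fun h => haA (Finset.mem_of_mem_erase h)),
        Finset.card_erase_of_mem hbA]
      have : 1 ≤ A.card := Finset.card_pos.2 ⟨b, hbA⟩
      omega
  rwa [this]

end MatroidHelpers
section Kernel
variable [Fintype α] [DecidableEq α] {M : Matroid α}

open Matroid

lemma exists_support {p : Finset α → ℝ} (hp : (∑ A : Finset α, p A) = 1) :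
    ∃ A : Finset α, p A ≠ 0 := by
  by_contra h
  push_neg at h
  rw [Finset.sum_eq_zero (fun A _ => h A)] at hp
  norm_num at hp

/-- Kernel counting lemma : if every support set of `p` spans `T`, then the total
satisfaction of `q` on `T` is at most that of `p`. -/
lemma kernel_lemma {p q : Finset α → ℝ} (hp : IsBaseDistrib M p) (hq : IsBaseDistrib M q)
    (T : Finset α)
    (hT : ∀ A : Finset α, p A ≠ 0 → (T : Set α) ⊆ M.closure ((A ∩ T : Finset α) : Set α)) :
    ∑ v ∈ T, sat q v ≤ ∑ v ∈ T, sat p v := by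
  obtain ⟨A₀, hA₀⟩ := exists_support hp.2.2
  set c : ℕ := (A₀ ∩ T).card with hc
  have hindep : ∀ A : Finset α, p A ≠ 0 → M.Indep ((A ∩ T : Finset α) : Set α) := fun A hA =>
    (hp.2.1 A hA).indep.subset (by rw [Finset.coe_inter]; exact Set.inter_subset_left)
  have hindepq : ∀ B : Finset α, q B ≠ 0 → M.Indep ((B ∩ T : Finset α) : Set α) := fun B hB =>
    (hq.2.1 B hB).indep.subset (by rw [Finset.coe_inter]; exact Set.inter_subset_left)
  have hsubT : ∀ B : Finset α, ((B ∩ T : Finset α) : Set α) ⊆ (T : Set α) := fun B => by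
    rw [Finset.coe_inter]; exact Set.inter_subset_right
  have key1 : ∀ A : Finset α, p A ≠ 0 → (A ∩ T).card = c := by
    intro A hA
    exact le_antisymm
      (card_le_of_subset_closure (hindep A hA) (hindep A₀ hA₀) ((hsubT A).trans (hT A₀ hA₀)))
      (card_le_of_subset_closure (hindep A₀ hA₀) (hindep A hA) ((hsubT A₀).trans (hT A hA)))
  have key2 : ∀ B : Finset α, q B ≠ 0 → (B ∩ T).card ≤ c := by
    intro B hB
    exact card_le_of_subset_closure (hindepq B hB) (hindep A₀ hA₀) ((hsubT B).trans (hT A₀ hA₀))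
  rw [sat_sum_eq, sat_sum_eq]
  have h1 : ∑ B : Finset α, ((B ∩ T).card : ℝ) * q B ≤ ∑ B : Finset α, (c : ℝ) * q B := by
    refine Finset.sum_le_sum fun B _ => ?_
    by_cases hB : q B = 0
    · simp [hB]
    · exact mul_le_mul_of_nonneg_right (by exact_mod_cast key2 B hB) (hq.1 B)
  have h2 : ∑ A : Finset α, ((A ∩ T).card : ℝ) * p A = ∑ A : Finset α, (c : ℝ) * p A := by
    refine Finset.sum_congr rfl fun A _ => ?_
    by_cases hA : p A = 0
    · simp [hA]
    · rw [key1 A hA]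
  calc ∑ B : Finset α, ((B ∩ T).card : ℝ) * q B ≤ ∑ B : Finset α, (c : ℝ) * q B := h1
    _ = (c : ℝ) := by rw [← Finset.mul_sum, hq.2.2, mul_one]
    _ = ∑ A : Finset α, (c : ℝ) * p A := by rw [← Finset.mul_sum, hp.2.2, mul_one]
    _ = _ := h2.symm

/-- All base distributions have the same total satisfaction. -/
lemma sum_sat_base_eq (hE : M.E = Set.univ) {p q : Finset α → ℝ}
    (hp : IsBaseDistrib M p) (hq : IsBaseDistrib M q) :
    ∑ u : α, sat q u = ∑ u : α, sat p u := by
  have key : ∀ r : Finset α → ℝ, IsBaseDistrib M r →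
      ∀ A : Finset α, r A ≠ 0 →
        ((Finset.univ : Finset α) : Set α) ⊆ M.closure ((A ∩ Finset.univ : Finset α) : Set α) := by
    intro r hr A hA
    rw [Finset.inter_univ, (hr.2.1 A hA).closure_eq, hE]
    exact Set.subset_univ _
  exact le_antisymm (kernel_lemma hp hq Finset.univ (key p hp))
    (kernel_lemma hq hp Finset.univ (key q hq))

end Kernel
section Swap
variable [Fintype α] [DecidableEq α] {M : Matroid α}

open Matroid

/-- `Swappable M p b a` : some support set of `p` allows exchanging `b` out and `a` in. -/
def Swappable [Fintype α] [DecidableEq α] (M : Matroid α) (p : Finset α → ℝ) (b a : α) : Prop :=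
  ∃ A : Finset α, p A ≠ 0 ∧ b ∈ A ∧ a ∉ A ∧
    M.IsBase ((insert a (A.erase b) : Finset α) : Set α)

lemma swap_path_realize {p : Finset α → ℝ} (hp : IsBaseDistrib M p) {u v : α}
    (h : Relation.ReflTransGen (Swappable M p) u v) :
    ∃ (C : ℕ) (ε₀ : ℝ), 0 < ε₀ ∧ ∀ ε : ℝ, 0 < ε → ε ≤ ε₀ →
      ∃ p' : Finset α → ℝ, IsBaseDistrib M p' ∧ (∀ B, p B - C * ε ≤ p' B) ∧
        ∀ w, sat p' w = sat p w + ε * ((if w = v then 1 else 0) - (if w = u then 1 else 0)) := by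
  induction h with
  | refl =>
      exact ⟨0, 1, one_pos, fun ε hε hε' =>
        ⟨p, hp, fun B => by simp, fun w => by simp⟩⟩
  | @tail b c hub hswap ih =>
      obtain ⟨C, ε₀, hε₀, H⟩ := ih
      obtain ⟨A, hA0, hbA, hcA, hbase⟩ := hswap
      have hpA : 0 < p A := lt_of_le_of_ne (hp.1 A) (Ne.symm hA0)
      refine ⟨C + 1, min ε₀ (p A / (C + 1)), lt_min hε₀ (by positivity), fun ε hε hε' => ?_⟩
      obtain ⟨p'', hp'', hbound, hsat⟩ := H ε hε (le_trans hε' (min_le_left _ _))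
      have hεA : ε * (C + 1) ≤ p A := by
        have h1 : ε ≤ p A / (C + 1) := le_trans hε' (min_le_right _ _)
        rw [le_div_iff₀ (by positivity)] at h1
        exact_mod_cast h1
      have hp''A : ε ≤ p'' A := by
        have := hbound A
        push_cast at hεA this ⊢
        nlinarith
      set A' : Finset α := insert c (A.erase b) with hA'
      have hA'A : A' ≠ A := fun h => hcA (h ▸ Finset.mem_insert_self c _)
      have hAA' : A ≠ A' := fun h => hA'A h.symm
      refine ⟨fun B => p'' B + (if B = A' then ε else 0) - (if B = A then ε else 0),
        ⟨?_, ?_, ?_⟩, ?_, ?_⟩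
      · intro B
        by_cases h1 : B = A'
        · simp [h1, hA'A]
          linarith [hp''.1 A']
        · by_cases h2 : B = A
          · simp [h1, h2, hAA']
            linarith [hp''A]
          · simp [h1, h2, hp''.1 B]
      · intro B hB
        by_cases h1 : B = A'
        · rw [h1]; exact hbase
        · by_cases h2 : B = A
          · rw [h2]; exact hp.2.1 A hA0
          · simp [h1, h2] at hB
            exact hp''.2.1 B hB
      · rw [Finset.sum_sub_distrib, Finset.sum_add_distrib, hp''.2.2,
          Finset.sum_ite_eq' Finset.univ A' (fun _ => ε),
          Finset.sum_ite_eq' Finset.univ A (fun _ => ε)]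
        simp
      · intro B
        have hb := hbound B
        have h0 : (0:ℝ) ≤ (if B = A' then ε else 0) := by split <;> simp [hε.le]
        have h1 : (if B = A then ε else 0) ≤ ε := by split <;> simp [hε.le]
        push_cast
        push_cast at hb
        linarith
      · intro w
        rw [sat_shift p'' A A' ε w, hsat w]
        have hind : (if w ∈ A' then (ε:ℝ) else 0) - (if w ∈ A then ε else 0)
            = ε * ((if w = c then 1 else 0) - (if w = b then 1 else 0)) := by
          have hcb : c ≠ b := fun h => hcA (h ▸ hbA)
          by_cases hwc : w = c
          · subst hwc
            simp [hA', hcA, hcb]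
          · by_cases hwb : w = b
            · subst hwb
              simp [hA', hbA, hwc, Finset.mem_erase]
            · have hiff : w ∈ A' ↔ w ∈ A := by
                simp [hA', Finset.mem_insert, Finset.mem_erase, hwc, hwb]
              by_cases hwA : w ∈ A
              · rw [if_pos (hiff.2 hwA), if_pos hwA]; simp [hwc, hwb]
              · rw [if_neg (fun h => hwA (hiff.1 h)), if_neg hwA]; simp [hwc, hwb]
        linear_combination hind
end Swap
section Reach
variable [Fintype α] [DecidableEq α] {M : Matroid α}

open Matroid Finset

lemma reach_down (hE : M.E = Set.univ) {p q : Finset α → ℝ} (hp : IsBaseDistrib M p)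
    (hq : IsBaseDistrib M q) (u : α) (h : sat q u < sat p u) :
    ∃ v, sat p v < sat q v ∧ Relation.ReflTransGen (Swappable M p) u v := by
  classical
  by_contra hcon
  push_neg at hcon
  set R : Finset α :=
    Finset.univ.filter (fun a => Relation.ReflTransGen (Swappable M p) u a) with hR
  have hmemR : ∀ a, a ∈ R ↔ Relation.ReflTransGen (Swappable M p) u a := by
    intro a; simp [hR]
  have huR : u ∈ R := (hmemR u).2 Relation.ReflTransGen.refl
  have hRq : ∀ v ∈ R, sat q v ≤ sat p v := fun v hv =>
    not_lt.1 (fun hlt => hcon v hlt ((hmemR v).1 hv))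
  have hT : ∀ A : Finset α, p A ≠ 0 →
      ((Rᶜ : Finset α) : Set α) ⊆ M.closure ((A ∩ Rᶜ : Finset α) : Set α) := by
    intro A hA a ha
    have haR : a ∉ R := by
      have : a ∈ (Rᶜ : Finset α) := by exact_mod_cast ha
      simpa using this
    by_cases haA : a ∈ A
    · refine M.subset_closure _ (by rw [hE]; exact Set.subset_univ _) ?_
      have : a ∈ A ∩ Rᶜ := Finset.mem_inter.2 ⟨haA, Finset.mem_compl.2 haR⟩
      exact_mod_cast this
    · by_contra hcl
      obtain ⟨b, hbA, hbX, hbase⟩ :=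
        exchange_lemma hE (hp.2.1 A hA) Finset.inter_subset_left a haA hcl
      have hbR : b ∈ R := by
        by_contra hbR
        exact hbX (Finset.mem_inter.2 ⟨hbA, Finset.mem_compl.2 hbR⟩)
      have : Relation.ReflTransGen (Swappable M p) u a :=
        ((hmemR b).1 hbR).tail ⟨A, hA, hbA, haA, hbase⟩
      exact haR ((hmemR a).2 this)
  have hker := kernel_lemma hp hq Rᶜ hT
  have htot := sum_sat_base_eq hE hp hq
  have hs1 : ∑ x : α, sat q x = ∑ x ∈ R, sat q x + ∑ x ∈ Rᶜ, sat q x :=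
    (Finset.sum_add_sum_compl R _).symm
  have hs2 : ∑ x : α, sat p x = ∑ x ∈ R, sat p x + ∑ x ∈ Rᶜ, sat p x :=
    (Finset.sum_add_sum_compl R _).symm
  have hRlt : ∑ x ∈ R, sat q x < ∑ x ∈ R, sat p x :=
    Finset.sum_lt_sum hRq ⟨u, huR, h⟩
  linarith

lemma reach_up (hE : M.E = Set.univ) {p q : Finset α → ℝ} (hp : IsBaseDistrib M p)
    (hq : IsBaseDistrib M q) (u : α) (h : sat p u < sat q u) :
    ∃ v, sat q v < sat p v ∧ Relation.ReflTransGen (fun a b => Swappable M p b a) u v := by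
  classical
  by_contra hcon
  push_neg at hcon
  set R : Finset α :=
    Finset.univ.filter (fun a => Relation.ReflTransGen (fun a b => Swappable M p b a) u a)
    with hR
  have hmemR : ∀ a, a ∈ R ↔ Relation.ReflTransGen (fun a b => Swappable M p b a) u a := by
    intro a; simp [hR]
  have huR : u ∈ R := (hmemR u).2 Relation.ReflTransGen.refl
  have hRp : ∀ v ∈ R, sat p v ≤ sat q v := fun v hv =>
    not_lt.1 (fun hlt => hcon v hlt ((hmemR v).1 hv))
  have hT : ∀ A : Finset α, p A ≠ 0 →
      ((R : Finset α) : Set α) ⊆ M.closure ((A ∩ R : Finset α) : Set α) := by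
    intro A hA a ha
    have haR : a ∈ R := by exact_mod_cast ha
    by_cases haA : a ∈ A
    · refine M.subset_closure _ (by rw [hE]; exact Set.subset_univ _) ?_
      have : a ∈ A ∩ R := Finset.mem_inter.2 ⟨haA, haR⟩
      exact_mod_cast this
    · by_contra hcl
      obtain ⟨b, hbA, hbX, hbase⟩ :=
        exchange_lemma hE (hp.2.1 A hA) Finset.inter_subset_left a haA hcl
      have hbR : b ∉ R := fun hb => hbX (Finset.mem_inter.2 ⟨hbA, hb⟩)
      exact hbR ((hmemR b).2 (((hmemR a).1 haR).tail ⟨A, hA, hbA, haA, hbase⟩))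
  have hker := kernel_lemma hp hq R hT
  have hRlt : ∑ x ∈ R, sat p x < ∑ x ∈ R, sat q x :=
    Finset.sum_lt_sum hRp ⟨u, huR, h⟩
  linarith

end Reach
section Lift
variable [Fintype α] [DecidableEq α] {M : Matroid α}

open Matroid

/-- Any distribution over independent sets can be lifted to a distribution over bases
with pointwise at least the same satisfaction probabilities. -/
lemma lift_distrib {D : Finset α → ℝ}
    (hD : IsDistrib (fun A : Finset α => M.Indep (A : Set α)) D) :
    ∃ D' : Finset α → ℝ, IsBaseDistrib M D' ∧ ∀ u, sat D u ≤ sat D' u := by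
  classical
  have hext : ∀ A : Finset α, ∃ B : Finset α,
      M.Indep (A : Set α) → (A ⊆ B ∧ M.IsBase (B : Set α)) := by
    intro A
    by_cases hA : M.Indep (A : Set α)
    · obtain ⟨B, hB, hAB⟩ := hA.exists_isBase_superset
      have hBfin : B.Finite := Set.toFinite _
      refine ⟨hBfin.toFinset, fun _ => ⟨?_, ?_⟩⟩
      · intro x hx
        rw [Set.Finite.mem_toFinset]
        exact hAB (by exact_mod_cast hx)
      · rwa [Set.Finite.coe_toFinset]
    · exact ⟨A, fun h => absurd h hA⟩
  choose g hg using hext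
  refine ⟨fun B => ∑ A ∈ Finset.univ.filter (fun A => g A = B), D A, ⟨?_, ?_, ?_⟩, ?_⟩
  · exact fun B => Finset.sum_nonneg fun A _ => hD.1 A
  · intro B hB
    obtain ⟨A, hA, hDA⟩ := Finset.exists_ne_zero_of_sum_ne_zero hB
    have hgA := hg A (hD.2.1 A hDA)
    rw [← (Finset.mem_filter.1 hA).2]
    exact hgA.2
  · rw [Finset.sum_fiberwise Finset.univ g D]
    exact hD.2.2
  · intro u
    have hrw : sat (fun B => ∑ A ∈ Finset.univ.filter (fun A => g A = B), D A) u
        = ∑ A : Finset α, (if u ∈ g A then D A else 0) := by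
      unfold sat
      rw [← Finset.sum_fiberwise Finset.univ g (fun A => if u ∈ g A then D A else 0)]
      refine Finset.sum_congr rfl fun B _ => ?_
      by_cases hu : u ∈ B
      · rw [if_pos hu]
        refine Finset.sum_congr rfl fun A hA => ?_
        rw [if_pos ((Finset.mem_filter.1 hA).2 ▸ hu)]
      · rw [if_neg hu]
        refine (Finset.sum_eq_zero fun A hA => ?_).symm
        rw [if_neg ((Finset.mem_filter.1 hA).2 ▸ hu)]
    rw [hrw]
    unfold sat
    refine Finset.sum_le_sum fun A _ => ?_
    by_cases hDA : D A = 0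
    · simp [hDA]
    · have hgA := hg A (hD.2.1 A hDA)
      by_cases hu : u ∈ A
      · rw [if_pos hu, if_pos (hgA.1 hu)]
      · rw [if_neg hu]
        split
        · exact hD.1 A
        · exact le_refl 0
end Lift
/-- `F` is a maxmin-fair distribution over the feasible solutions `sol`. -/
def MaxminFair [Fintype α] [DecidableEq α] (sol : Finset α → Prop) (F : Finset α → ℝ) : Prop :=
  IsDistrib sol F ∧
    ∀ D, IsDistrib sol D → ∀ u, sat F u < sat D u →
      ∃ v, sat D v < sat F v ∧ sat F v ≤ sat F u

/-- `D` is Pareto-efficient. -/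
def ParetoEff [Fintype α] [DecidableEq α] (sol : Finset α → Prop) (D : Finset α → ℝ) : Prop :=
  IsDistrib sol D ∧
    ¬ ∃ D', IsDistrib sol D' ∧ (∀ u, sat D u ≤ sat D' u) ∧ ∃ u, sat D u < sat D' u

/-- `F` is minmax-Pareto. -/
def MinmaxPareto [Fintype α] [DecidableEq α] (sol : Finset α → Prop) (F : Finset α → ℝ) : Prop :=
  ParetoEff sol F ∧
    ∀ D, ParetoEff sol D → ∀ u, sat D u < sat F u →
      ∃ v, sat F v < sat D v ∧ sat F u ≤ sat F v

section Pareto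
variable [Fintype α] [DecidableEq α] {M : Matroid α}

open Matroid

/-- Distributions over bases are Pareto-efficient. -/
lemma pareto_of_baseDistrib (hE : M.E = Set.univ) {p : Finset α → ℝ} (hp : IsBaseDistrib M p) :
    ParetoEff (fun A : Finset α => M.Indep (A : Set α)) p := by
  refine ⟨hp.isDistribIndep, ?_⟩
  rintro ⟨D', hD', hdom, u, hu⟩
  obtain ⟨D'', hD'', hle⟩ := lift_distrib hD'
  have htot := sum_sat_base_eq hE hp hD''
  have : ∑ x : α, sat p x < ∑ x : α, sat D'' x :=
    Finset.sum_lt_sum (fun i _ => (hdom i).trans (hle i))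
      ⟨u, Finset.mem_univ u, lt_of_lt_of_le hu (hle u)⟩
  linarith

/-- Pareto-efficient distributions are supported on bases. -/
lemma baseDistrib_of_pareto (hE : M.E = Set.univ) {p : Finset α → ℝ}
    (hP : ParetoEff (fun A : Finset α => M.Indep (A : Set α)) p) : IsBaseDistrib M p := by
  classical
  refine ⟨hP.1.1, ?_, hP.1.2.2⟩
  intro A hA
  by_contra hAb
  have hAi : M.Indep (A : Set α) := hP.1.2.1 A hA
  obtain ⟨B, hB⟩ := M.exists_isBase
  obtain ⟨e, heBA, hei⟩ := hAi.exists_insert_of_not_isBase hAb hB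
  have heA : e ∉ A := by
    have := heBA.2; exact_mod_cast this
  have hine : M.Indep ((insert e A : Finset α) : Set α) := by
    rw [Finset.coe_insert]; exact hei
  have hpA : 0 < p A := lt_of_le_of_ne (hP.1.1 A) (Ne.symm hA)
  have hne : (insert e A : Finset α) ≠ A := fun h => heA (h ▸ Finset.mem_insert_self e A)
  apply hP.2
  refine ⟨fun B => p B + (if B = insert e A then p A else 0) - (if B = A then p A else 0),
    ⟨?_, ?_, ?_⟩, ?_, e, ?_⟩
  · intro B
    by_cases h1 : B = insert e A
    · simp [h1, hne]
      linarith [hP.1.1 (insert e A)]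
    · by_cases h2 : B = A
      · simp [h1, h2, hne, (fun h => hne h.symm : A ≠ insert e A)]
        rw [if_neg (fun h => hne h.symm)]
      · simp [h1, h2]
        exact hP.1.1 B
  · intro B hB'
    by_cases h1 : B = insert e A
    · rw [h1]; exact hine
    · by_cases h2 : B = A
      · rw [h2]; exact hAi
      · simp [h1, h2] at hB'
        exact hP.1.2.1 B hB'
  · rw [Finset.sum_sub_distrib, Finset.sum_add_distrib, hP.1.2.2,
      Finset.sum_ite_eq' Finset.univ (insert e A) (fun _ => p A),
      Finset.sum_ite_eq' Finset.univ A (fun _ => p A)]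
    simp
  · intro w
    rw [sat_shift p A (insert e A) (p A) w]
    by_cases hw : w ∈ A
    · rw [if_pos (Finset.mem_insert_of_mem hw), if_pos hw]; linarith
    · rw [if_neg hw]
      split <;> linarith
  · rw [sat_shift p A (insert e A) (p A) e, if_pos (Finset.mem_insert_self e A), if_neg heA]
    linarith

end Pareto

/-- For the search problem associated with a matroid `M` on a finite nonempty ground set
(the whole type `α`, individuals `= α`, feasible solutions `=` independent sets of `M`),
a distribution over the solutions is maxmin-fair if and only if it is minmax-Pareto. -/
theorem maxminFair_iff_minmaxPareto_matroid [Fintype α] [DecidableEq α] [Nonempty α]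
    (M : Matroid α) (hE : M.E = Set.univ) (F : Finset α → ℝ) :
    MaxminFair (fun A : Finset α => M.Indep (A : Set α)) F ↔
      MinmaxPareto (fun A : Finset α => M.Indep (A : Set α)) F := by
  constructor
  · intro h
    have hPar : ParetoEff (fun A : Finset α => M.Indep (A : Set α)) F := by
      refine ⟨h.1, ?_⟩
      rintro ⟨D', hD', hdom, u, hu⟩
      obtain ⟨v, hv1, hv2⟩ := h.2 D' hD' u hu
      exact absurd (hdom v) (not_le.2 hv1)
    have hFb : IsBaseDistrib M F := baseDistrib_of_pareto hE hPar
    refine ⟨hPar, ?_⟩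
    intro D hD u hu
    have hDb : IsBaseDistrib M D := baseDistrib_of_pareto hE hD
    by_contra hcon
    push_neg at hcon
    obtain ⟨v, hv, hreach⟩ := reach_down hE hFb hDb u hu
    obtain ⟨C, ε₀, hε₀, H⟩ := swap_path_realize hFb hreach
    obtain ⟨p', hp', _, hsat⟩ := H ε₀ hε₀ le_rfl
    have hvu : v ≠ u := by
      intro h'; rw [h'] at hv; linarith
    have hsatv : sat F v < sat p' v := by
      rw [hsat v, if_pos rfl, if_neg hvu]; linarith
    obtain ⟨z, hz1, hz2⟩ := h.2 p' hp'.isDistribIndep v hsatv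
    have hzu : z = u := by
      by_contra hzu
      rw [hsat z, if_neg hzu] at hz1
      by_cases hzv : z = v
      · rw [if_pos hzv] at hz1; linarith
      · rw [if_neg hzv] at hz1; linarith
    rw [hzu] at hz2
    exact absurd hz2 (not_le.2 (hcon v hv))
  · intro h
    have hFb : IsBaseDistrib M F := baseDistrib_of_pareto hE h.1
    refine ⟨h.1.1, ?_⟩
    intro D hD u hu
    obtain ⟨D', hD'b, hle⟩ := lift_distrib hD
    have hu' : sat F u < sat D' u := lt_of_lt_of_le hu (hle u)
    by_contra hcon
    push_neg at hcon
    obtain ⟨v, hv, hreach⟩ := reach_up hE hFb hD'b u hu'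
    have hconv : sat F u < sat F v := hcon v (lt_of_le_of_lt (hle v) hv)
    have hvu : v ≠ u := by
      intro h'; rw [h'] at hconv; linarith
    have hreach' : Relation.ReflTransGen (Swappable M F) v u :=
      Relation.reflTransGen_swap.1 hreach
    obtain ⟨C, ε₀, hε₀, H⟩ := swap_path_realize hFb hreach'
    obtain ⟨p', hp', _, hsat⟩ := H ε₀ hε₀ le_rfl
    have hsatv : sat p' v < sat F v := by
      rw [hsat v, if_neg hvu, if_pos rfl]; linarith
    obtain ⟨z, hz1, hz2⟩ := h.2 p' (pareto_of_baseDistrib hE hp') v hsatv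
    have hzu : z = u := by
      by_contra hzu
      rw [hsat z, if_neg hzu] at hz1
      by_cases hzv : z = v
      · rw [if_pos hzv] at hz1; linarith
      · rw [if_neg hzv] at hz1; linarith
    rw [hzu] at hz2
    linarith
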